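/- arXiv:2306.14348 — 4 statements merged into one kernel-verified Lean document; each statement's English description precedes it below -/
import Mathlib

section
/- (Deterministic core of Lemma 2.) Let μ, f, y* ∈ ℝ, σ > 0 and β ≥ 0, and suppose |μ − f| ≤ √β · σ. Then σ·τ((μ − y*)/σ) ≥ max(f − y*, 0) − √β · σ. That is, the expected improvement EI = σ·τ(z) with z = (μ − y*)/σ is lower bounded by the true improvement I = (f − y*)⁺ minus √β times the posterior standard deviation. -/
open Real MeasureTheory Filter

/-- The standard normal probability density function φ. -/
noncomputable def stdNormalPDF (z : ℝ) : ℝ := (Real.sqrt (2 * Real.pi))⁻¹ * Real.exp (-z ^ 2 / 2)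

/-- The standard normal cumulative distribution function Φ. -/
noncomputable def stdNormalCDF (z : ℝ) : ℝ := ∫ t in Set.Iic z, stdNormalPDF t

/-- τ(z) = z Φ(z) + φ(z). -/
noncomputable def tau (z : ℝ) : ℝ := z * stdNormalCDF z + stdNormalPDF z

lemma pdf_eq (x : ℝ) : stdNormalPDF x = (Real.sqrt (2 * Real.pi))⁻¹ * Real.exp (-(1/2 : ℝ) * x ^ 2) := by
  unfold stdNormalPDF; ring_nf

lemma pdf_nonneg (x : ℝ) : 0 ≤ stdNormalPDF x := by
  unfold stdNormalPDF
  positivity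

lemma pdf_integrable : Integrable stdNormalPDF := by
  have h : Integrable (fun x : ℝ => Real.exp (-(1/2 : ℝ) * x ^ 2)) := integrable_exp_neg_mul_sq (by norm_num)
  have h2 := h.const_mul ((Real.sqrt (2 * Real.pi))⁻¹)
  refine h2.congr ?_
  filter_upwards with x
  rw [pdf_eq]

lemma mul_pdf_integrable : Integrable (fun x : ℝ => x * stdNormalPDF x) := by
  have : Integrable (fun x : ℝ => x * Real.exp (-(1/2 : ℝ) * x ^ 2)) := integrable_mul_exp_neg_mul_sq (by norm_num)
  have := this.const_mul ((Real.sqrt (2 * Real.pi))⁻¹)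
  refine this.congr ?_
  filter_upwards with x
  rw [pdf_eq]; ring

lemma pdf_integral_one : ∫ x, stdNormalPDF x = 1 := by
  have h2π : (0:ℝ) < 2 * Real.pi := by positivity
  have : ∫ x : ℝ, Real.exp (-(1/2 : ℝ) * x ^ 2) = Real.sqrt (Real.pi / (1/2)) :=
    integral_gaussian (1/2)
  have h : ∫ x, stdNormalPDF x = (Real.sqrt (2 * Real.pi))⁻¹ * Real.sqrt (Real.pi / (1/2)) := by
    simp_rw [pdf_eq]
    rw [MeasureTheory.integral_const_mul, this]
  rw [h]
  have : Real.pi / (1/2 : ℝ) = 2 * Real.pi := by ring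
  rw [this, inv_mul_cancel₀ (by positivity)]

lemma pdf_hasDeriv (x : ℝ) : HasDerivAt (fun t => -stdNormalPDF t) (x * stdNormalPDF x) x := by
  have h1 : HasDerivAt (fun t : ℝ => -(t ^ 2) / 2) (-x) x := by
    have : HasDerivAt (fun t : ℝ => t ^ 2) (2 * x) x := by
      simpa using (hasDerivAt_pow 2 x)
    have := (this.neg).div_const 2
    simpa using this.congr_deriv (by ring)
  have h2 : HasDerivAt (fun t : ℝ => Real.exp (-(t ^ 2) / 2)) (Real.exp (-(x ^ 2) / 2) * (-x)) x :=
    h1.exp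
  have h3 := (h2.const_mul ((Real.sqrt (2 * Real.pi))⁻¹)).neg
  have : -((Real.sqrt (2 * Real.pi))⁻¹ * (Real.exp (-(x ^ 2) / 2) * (-x))) = x * stdNormalPDF x := by
    unfold stdNormalPDF; ring_nf
  rw [this] at h3
  refine h3.congr_of_eventuallyEq ?_
  filter_upwards with t
  unfold stdNormalPDF; ring_nf; rfl

lemma pdf_tendsto_atTop : Tendsto stdNormalPDF atTop (nhds 0) := by
  have key : Tendsto (fun x : ℝ => x ^ 2 / 2) atTop atTop :=
    (tendsto_pow_atTop (by norm_num)).atTop_div_const (by norm_num)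
  have h : Tendsto (fun x : ℝ => Real.exp (-(x ^ 2 / 2))) atTop (nhds 0) :=
    Real.tendsto_exp_atBot.comp (tendsto_neg_atTop_atBot.comp key)
  have h2 := h.const_mul ((Real.sqrt (2 * Real.pi))⁻¹)
  simp only [mul_zero] at h2
  refine h2.congr ?_
  intro x
  rw [pdf_eq]
  ring_nf

lemma pdf_tendsto_atBot : Tendsto stdNormalPDF atBot (nhds 0) := by
  have key : Tendsto (fun x : ℝ => x ^ 2 / 2) atBot atTop := by
    have h1 : Tendsto (fun x : ℝ => x ^ 2) atBot atTop := by
      have := (tendsto_pow_atTop (n := 2) (by norm_num)).comp (tendsto_neg_atBot_atTop : Tendsto (fun x : ℝ => -x) atBot atTop)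
      refine this.congr ?_
      intro x
      simp [Function.comp, neg_sq]
    exact h1.atTop_div_const (by norm_num)
  have h : Tendsto (fun x : ℝ => Real.exp (-(x ^ 2 / 2))) atBot (nhds 0) :=
    Real.tendsto_exp_atBot.comp (tendsto_neg_atTop_atBot.comp key)
  have h2 := h.const_mul ((Real.sqrt (2 * Real.pi))⁻¹)
  simp only [mul_zero] at h2
  refine h2.congr ?_
  intro x
  rw [pdf_eq]
  ring_nf

lemma integral_mul_pdf_Iic (z : ℝ) : ∫ t in Set.Iic z, t * stdNormalPDF t = -stdNormalPDF z := by
  have := MeasureTheory.integral_Iic_of_hasDerivAt_of_tendsto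
    (f := fun t => -stdNormalPDF t) (f' := fun t => t * stdNormalPDF t) (a := z)
    ((pdf_hasDeriv z).continuousAt.continuousWithinAt)
    (fun x _ => pdf_hasDeriv x)
    (mul_pdf_integrable.integrableOn)
    (by simpa using pdf_tendsto_atBot.neg)
  simpa using this

lemma integral_mul_pdf_Ioi (z : ℝ) : ∫ t in Set.Ioi z, t * stdNormalPDF t = stdNormalPDF z := by
  have := MeasureTheory.integral_Ioi_of_hasDerivAt_of_tendsto
    (f := fun t => -stdNormalPDF t) (f' := fun t => t * stdNormalPDF t) (a := z)
    ((pdf_hasDeriv z).continuousAt.continuousWithinAt)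
    (fun x _ => pdf_hasDeriv x)
    (mul_pdf_integrable.integrableOn)
    (by simpa using pdf_tendsto_atTop.neg)
  simpa using this

lemma cdf_le_one (z : ℝ) : stdNormalCDF z ≤ 1 := by
  rw [← pdf_integral_one]
  exact setIntegral_le_integral pdf_integrable (by filter_upwards with x using pdf_nonneg x)

lemma one_sub_cdf (z : ℝ) : 1 - stdNormalCDF z = ∫ t in Set.Ioi z, stdNormalPDF t := by
  have := intervalIntegral.integral_Iic_add_Ioi (b := z) (f := stdNormalPDF)
    pdf_integrable.integrableOn pdf_integrable.integrableOn
  rw [← pdf_integral_one]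
  unfold stdNormalCDF
  linarith [this]

lemma tau_nonneg (z : ℝ) : 0 ≤ tau z := by
  unfold tau
  rcases le_or_gt 0 z with hz | hz
  · have h1 : 0 ≤ stdNormalCDF z := by
      unfold stdNormalCDF
      exact setIntegral_nonneg measurableSet_Iic (fun t _ => pdf_nonneg t)
    nlinarith [pdf_nonneg z]
  · -- z < 0 : z * Φ(z) ≥ -φ(z), i.e. Φ(z) ≤ φ(z)/(-z)
    have key : z * stdNormalCDF z ≥ ∫ t in Set.Iic z, t * stdNormalPDF t := by
      have : ∫ t in Set.Iic z, z * stdNormalPDF t ≥ ∫ t in Set.Iic z, t * stdNormalPDF t := by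
        apply setIntegral_mono_on (mul_pdf_integrable.integrableOn)
          ((pdf_integrable.integrableOn).const_mul z) measurableSet_Iic
        intro t ht
        exact mul_le_mul_of_nonneg_right ht.out (pdf_nonneg t)
      rw [MeasureTheory.integral_const_mul] at this
      exact this
    rw [integral_mul_pdf_Iic] at key
    linarith
  
lemma tau_ge (z : ℝ) : z ≤ tau z := by
  unfold tau
  rcases le_or_gt z 0 with hz | hz
  · have h1 : z * stdNormalCDF z ≥ z := by
      nlinarith [cdf_le_one z]
    linarith [pdf_nonneg z]
  · -- z > 0: z * (1 - Φ(z)) ≤ φ(z)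
    have key : z * (1 - stdNormalCDF z) ≤ ∫ t in Set.Ioi z, t * stdNormalPDF t := by
      rw [one_sub_cdf]
      have : ∫ t in Set.Ioi z, z * stdNormalPDF t ≤ ∫ t in Set.Ioi z, t * stdNormalPDF t := by
        apply setIntegral_mono_on ((pdf_integrable.integrableOn).const_mul z)
          (mul_pdf_integrable.integrableOn) measurableSet_Ioi
        intro t ht
        exact mul_le_mul_of_nonneg_right (le_of_lt ht.out) (pdf_nonneg t)
      rw [MeasureTheory.integral_const_mul] at this
      exact this
    rw [integral_mul_pdf_Ioi] at key
    nlinarith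

theorem ei_lower_bound (μ f ystar σ β : ℝ) (hσ : 0 < σ) (hβ : 0 ≤ β)
    (h : |μ - f| ≤ Real.sqrt β * σ) :
    σ * tau ((μ - ystar) / σ) ≥ max (f - ystar) 0 - Real.sqrt β * σ := by
  set z := (μ - ystar) / σ with hz
  have h1 : σ * tau z ≥ max (μ - ystar) 0 := by
    rcases le_total (μ - ystar) 0 with hm | hm
    · rw [max_eq_right hm]
      exact mul_nonneg hσ.le (tau_nonneg z)
    · rw [max_eq_left hm]
      have := mul_le_mul_of_nonneg_left (tau_ge z) hσ.le
      calc μ - ystar = σ * z := by rw [hz]; field_simp [hσ.ne']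
        _ ≤ σ * tau z := this
  have h2 : max (f - ystar) 0 - max (μ - ystar) 0 ≤ |μ - f| := by
    rcases le_total (f - ystar) 0 with hf | hf
    · rw [max_eq_right hf]
      have : 0 ≤ max (μ - ystar) 0 := le_max_right _ _
      have : 0 ≤ |μ - f| := abs_nonneg _
      linarith [le_max_right (μ - ystar) 0]
    · rw [max_eq_left hf]
      have : μ - ystar ≤ max (μ - ystar) 0 := le_max_left _ _
      have habs : f - μ ≤ |μ - f| := by
        rw [abs_sub_comm]; exact le_abs_self _
      linarith
  linarith
end

section
/- (Lemma 4, first part.) Let κ > 0, let σ satisfy 0 < σ ≤ 1, and let z ≤ 0. If κ ≤ σ·τ(z), then z² ≤ log(1/(2πκ²)). -/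
open Real MeasureTheory Filter

theorem lemma4_first_part (κ σ z : ℝ) (hκ : 0 < κ) (hσ0 : 0 < σ) (hσ1 : σ ≤ 1)
    (hz : z ≤ 0) (h : κ ≤ σ * tau z) :
    z ^ 2 ≤ Real.log (1 / (2 * Real.pi * κ ^ 2)) := by
  have hpi : (0:ℝ) < 2 * Real.pi := by positivity
  have hcdf : 0 ≤ stdNormalCDF z := by
    apply MeasureTheory.setIntegral_nonneg measurableSet_Iic
    intro t _
    unfold stdNormalPDF
    positivity
  have htau : tau z ≤ stdNormalPDF z := by
    unfold tau
    nlinarith [mul_nonpos_of_nonpos_of_nonneg hz hcdf]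
  have htaupos : 0 < tau z := by
    by_contra hc
    push_neg at hc
    nlinarith
  have hκp : κ ≤ stdNormalPDF z := by
    calc κ ≤ σ * tau z := h
    _ ≤ 1 * tau z := by nlinarith
    _ = tau z := one_mul _
    _ ≤ _ := htau
  have hsq : Real.sqrt (2 * Real.pi) > 0 := Real.sqrt_pos.mpr hpi
  have h1 : Real.sqrt (2 * Real.pi) * κ ≤ Real.exp (-z ^ 2 / 2) := by
    unfold stdNormalPDF at hκp
    calc Real.sqrt (2 * Real.pi) * κ
        ≤ Real.sqrt (2 * Real.pi) * ((Real.sqrt (2 * Real.pi))⁻¹ * Real.exp (-z ^ 2 / 2)) := by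
          apply mul_le_mul_of_nonneg_left hκp (le_of_lt hsq)
      _ = Real.exp (-z ^ 2 / 2) := by field_simp
  have h2 : 2 * Real.pi * κ ^ 2 ≤ Real.exp (-z ^ 2) := by
    have := mul_le_mul h1 h1 (by positivity) (Real.exp_nonneg _)
    rw [← Real.exp_add] at this
    have he : -z ^ 2 / 2 + -z ^ 2 / 2 = -z ^ 2 := by ring
    rw [he] at this
    have hs : Real.sqrt (2 * Real.pi) * Real.sqrt (2 * Real.pi) = 2 * Real.pi :=
      Real.mul_self_sqrt hpi.le
    nlinarith [this]
  have h3 : Real.log (2 * Real.pi * κ ^ 2) ≤ -z ^ 2 := by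
    calc Real.log (2 * Real.pi * κ ^ 2) ≤ Real.log (Real.exp (-z ^ 2)) :=
          Real.log_le_log (by positivity) h2
      _ = -z ^ 2 := Real.log_exp _
  rw [one_div, Real.log_inv]
  linarith
end

section
/- (Lemma 5.) Let v > 0, let T ≥ 1, and let σ₁, …, σ_T be real numbers with 0 ≤ σ_t² ≤ 1 for all t. Define γ = (1/2) Σ_{t=1}^{T} log(1 + v⁻²·σ_t²). Then Σ_{t=1}^{T} σ_t² ≤ (2 / log(1 + v⁻²)) · γ. -/
theorem cumulative_variance_bound (v : ℝ) (hv : 0 < v) (T : ℕ) (hT : 1 ≤ T)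
    (σ : ℕ → ℝ) (hσ : ∀ t ∈ Finset.Icc 1 T, 0 ≤ (σ t) ^ 2 ∧ (σ t) ^ 2 ≤ 1) :
    ∑ t ∈ Finset.Icc 1 T, (σ t) ^ 2 ≤
      (2 / Real.log (1 + (v ^ 2)⁻¹)) *
        ((1 / 2) * ∑ t ∈ Finset.Icc 1 T, Real.log (1 + (v ^ 2)⁻¹ * (σ t) ^ 2)) := by
  set c := (v ^ 2)⁻¹ with hc
  have hcpos : 0 < c := by positivity
  have hlogpos : 0 < Real.log (1 + c) := Real.log_pos (by linarith)
  have main : ∑ t ∈ Finset.Icc 1 T, (σ t)^2 * Real.log (1 + c) ≤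
      ∑ t ∈ Finset.Icc 1 T, Real.log (1 + c * (σ t) ^ 2) := by
    apply Finset.sum_le_sum
    intro t ht
    obtain ⟨h0, h1⟩ := hσ t ht
    have key : (1 + c) ^ ((σ t) ^ 2) ≤ 1 + (σ t) ^ 2 * c :=
      rpow_one_add_le_one_add_mul_self (by linarith) h0 h1
    have := Real.log_le_log (by positivity) key
    rw [Real.log_rpow (by linarith)] at this
    rw [mul_comm c ((σ t)^2)]
    exact this
  rw [← Finset.sum_mul] at main
  rw [div_mul_eq_mul_div, le_div_iff₀ hlogpos]
  linarith
end

section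
/- (Deterministic cumulative-regret assembly underlying Theorem 1.) Let T ≥ 1, v > 0, C ≥ 0 and γ ≥ 0. Let (β_t)_{t=1}^{T} be a nondecreasing sequence of nonnegative reals, let (σ_t)_{t=1}^{T} and (σ′_t)_{t=1}^{T} be nonnegative reals satisfying Σ_{t=1}^{T} σ_t² ≤ 2γ / log(1 + v⁻²) and Σ_{t=1}^{T} (σ′_t)² ≤ 2γ / log(1 + v⁻²), let (e_t)_{t=1}^{T} be nonnegative reals, and let (r_t)_{t=1}^{T} be reals satisfying r_t ≤ σ_t·(√β_t + 1 + √C) + √β_t·σ′_t + e_t for every t. Then Σ_{t=1}^{T} r_t ≤ √(6T(β_T + 1 + C)γ / log(1 + v⁻²)) + √(2Tβ_Tγ / log(1 + v⁻²)) + Σ_{t=1}^{T} e_t. -/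
theorem cumulative_regret_assembly (T : ℕ) (hT : 1 ≤ T) (v C γ : ℝ)
    (hv : 0 < v) (hC : 0 ≤ C) (hγ : 0 ≤ γ)
    (β σ σ' e r : ℕ → ℝ)
    (hβmono : ∀ s t, s ≤ t → β s ≤ β t) (hβ : ∀ t, 0 ≤ β t)
    (hσ : ∀ t, 0 ≤ σ t) (hσ' : ∀ t, 0 ≤ σ' t) (he : ∀ t, 0 ≤ e t)
    (hsumσ : ∑ t ∈ Finset.Icc 1 T, (σ t) ^ 2 ≤ 2 * γ / Real.log (1 + (v ^ 2)⁻¹))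
    (hsumσ' : ∑ t ∈ Finset.Icc 1 T, (σ' t) ^ 2 ≤ 2 * γ / Real.log (1 + (v ^ 2)⁻¹))
    (hr : ∀ t ∈ Finset.Icc 1 T,
      r t ≤ σ t * (Real.sqrt (β t) + 1 + Real.sqrt C) + Real.sqrt (β t) * σ' t + e t) :
    ∑ t ∈ Finset.Icc 1 T, r t ≤
      Real.sqrt (6 * T * (β T + 1 + C) * γ / Real.log (1 + (v ^ 2)⁻¹)) +
      Real.sqrt (2 * T * β T * γ / Real.log (1 + (v ^ 2)⁻¹)) +
      ∑ t ∈ Finset.Icc 1 T, e t := by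
  set L := Real.log (1 + (v ^ 2)⁻¹) with hLdef
  have hL : 0 < L := Real.log_pos (by
    have : 0 < (v ^ 2)⁻¹ := by positivity
    linarith)
  have hB : (0:ℝ) ≤ 2 * γ / L := by positivity
  have hcard : ((Finset.Icc 1 T).card : ℝ) = T := by
    simp [Nat.card_Icc]
  -- Cauchy–Schwarz style bound on sums
  have key : ∀ f : ℕ → ℝ, (∀ t, 0 ≤ f t) →
      (∑ t ∈ Finset.Icc 1 T, f t ^ 2 ≤ 2 * γ / L) →
      ∑ t ∈ Finset.Icc 1 T, f t ≤ Real.sqrt ((T : ℝ) * (2 * γ / L)) := by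
    intro f hf hsum
    have h1 : (∑ t ∈ Finset.Icc 1 T, f t) ^ 2 ≤ (T : ℝ) * (2 * γ / L) := by
      calc (∑ t ∈ Finset.Icc 1 T, f t) ^ 2
          ≤ ((Finset.Icc 1 T).card : ℝ) * ∑ t ∈ Finset.Icc 1 T, f t ^ 2 :=
            sq_sum_le_card_mul_sum_sq
        _ ≤ (T : ℝ) * (2 * γ / L) := by
            rw [hcard]; exact mul_le_mul_of_nonneg_left hsum (Nat.cast_nonneg T)
    exact Real.le_sqrt_of_sq_le h1
  set A := Real.sqrt (β T) + 1 + Real.sqrt C with hAdef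
  have hA0 : 0 ≤ A := by positivity
  have hsβ : Real.sqrt (β T) ^ 2 = β T := Real.sq_sqrt (hβ T)
  have hsC : Real.sqrt C ^ 2 = C := Real.sq_sqrt hC
  have hstep : ∀ t ∈ Finset.Icc 1 T,
      r t ≤ σ t * A + Real.sqrt (β T) * σ' t + e t := by
    intro t ht
    have htT : t ≤ T := (Finset.mem_Icc.mp ht).2
    have hsb : Real.sqrt (β t) ≤ Real.sqrt (β T) := Real.sqrt_le_sqrt (hβmono t T htT)
    have h1 : σ t * (Real.sqrt (β t) + 1 + Real.sqrt C) ≤ σ t * A := by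
      apply mul_le_mul_of_nonneg_left (by simp [hAdef]; linarith) (hσ t)
    have h2 : Real.sqrt (β t) * σ' t ≤ Real.sqrt (β T) * σ' t :=
      mul_le_mul_of_nonneg_right hsb (hσ' t)
    have := hr t ht
    linarith
  have hsum1 : ∑ t ∈ Finset.Icc 1 T, r t ≤
      A * (∑ t ∈ Finset.Icc 1 T, σ t) +
      Real.sqrt (β T) * (∑ t ∈ Finset.Icc 1 T, σ' t) +
      ∑ t ∈ Finset.Icc 1 T, e t := by
    have h := Finset.sum_le_sum hstep
    rw [Finset.sum_add_distrib, Finset.sum_add_distrib, ← Finset.sum_mul,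
      ← Finset.mul_sum] at h
    calc ∑ t ∈ Finset.Icc 1 T, r t
        ≤ (∑ t ∈ Finset.Icc 1 T, σ t) * A + Real.sqrt (β T) * (∑ t ∈ Finset.Icc 1 T, σ' t) + ∑ t ∈ Finset.Icc 1 T, e t := h
      _ = A * (∑ t ∈ Finset.Icc 1 T, σ t) + Real.sqrt (β T) * (∑ t ∈ Finset.Icc 1 T, σ' t) + ∑ t ∈ Finset.Icc 1 T, e t := by ring
  have hkσ := key σ hσ hsumσ
  have hkσ' := key σ' hσ' hsumσ'
  have hSs0 : 0 ≤ ∑ t ∈ Finset.Icc 1 T, σ t := Finset.sum_nonneg fun t _ => hσ t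
  have hSs'0 : 0 ≤ ∑ t ∈ Finset.Icc 1 T, σ' t := Finset.sum_nonneg fun t _ => hσ' t
  -- bound A by sqrt(3(β T + 1 + C))
  have hA : A ≤ Real.sqrt (3 * (β T + 1 + C)) := by
    rw [show (3:ℝ) * (β T + 1 + C) = A^2 + ((Real.sqrt (β T) - 1)^2 + (Real.sqrt (β T) - Real.sqrt C)^2 + (Real.sqrt C - 1)^2) by
      simp only [hAdef]; nlinarith [hsβ, hsC]]
    exact Real.le_sqrt_of_sq_le (by nlinarith [sq_nonneg (Real.sqrt (β T) - 1), sq_nonneg (Real.sqrt (β T) - Real.sqrt C), sq_nonneg (Real.sqrt C - 1)])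
  have h1 : A * (∑ t ∈ Finset.Icc 1 T, σ t) ≤
      Real.sqrt (6 * T * (β T + 1 + C) * γ / L) := by
    calc A * (∑ t ∈ Finset.Icc 1 T, σ t)
        ≤ Real.sqrt (3 * (β T + 1 + C)) * Real.sqrt ((T : ℝ) * (2 * γ / L)) :=
          mul_le_mul hA hkσ hSs0 (Real.sqrt_nonneg _)
      _ = Real.sqrt (6 * T * (β T + 1 + C) * γ / L) := by
          rw [← Real.sqrt_mul (by have := hβ T; linarith : (0:ℝ) ≤ 3 * (β T + 1 + C))]
          congr 1
          field_simp
          ring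
  have h2 : Real.sqrt (β T) * (∑ t ∈ Finset.Icc 1 T, σ' t) ≤
      Real.sqrt (2 * T * β T * γ / L) := by
    calc Real.sqrt (β T) * (∑ t ∈ Finset.Icc 1 T, σ' t)
        ≤ Real.sqrt (β T) * Real.sqrt ((T : ℝ) * (2 * γ / L)) :=
          mul_le_mul_of_nonneg_left hkσ' (Real.sqrt_nonneg _)
      _ = Real.sqrt (2 * T * β T * γ / L) := by
          rw [← Real.sqrt_mul (hβ T)]
          congr 1
          field_simp
  exact hsum1.trans (add_le_add (add_le_add h1 h2) le_rfl)
end
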